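/- Fix an integer k ≥ 1, a real z ≥ 1, and reals ζ₁, ζ₂ ≥ 1. There exist constants γ₁, γ₂ ≥ 1 depending only on z, ζ₁, ζ₂ such that the following holds for every integer d ≥ 1, every finite X ⊆ ℝ^d with more than k distinct points, and every x ∈ X such that X \ {x} ≠ ∅. Suppose that for each p ∈ X with p ≠ x we are given: a set Q_p ⊆ X with p ∈ Q_p, |Q_p| ≤ k, and Cost(X,Q_p) ≤ ζ₁ · min{Cost(X,T) : T ⊆ X, p ∈ T, |T| ≤ k}; a real Ψ_p with (1/ζ₂)·Cost(X,Q_p) ≤ Ψ_p ≤ ζ₂·Cost(X,Q_p); and an assignment π_p for (X,Q_p). For each such p set r_p = ‖x−p‖₂ and n_b(p) = #{y ∈ X : ‖π_p(y) − x‖₂ ≤ r_p/2}, and define ŝ(x) = max over p ∈ X \ {x} of r_p^z / (Ψ_p + n_b(p) · r_p^z). Then (1/γ₁) · τ(x) ≤ ŝ(x) ≤ 2^z · γ₂ · τ(x), where τ(x) is the (k,z)-medoids sensitivity of x with respect to X. -/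
import Mathlib

open scoped BigOperators Classical

/-- `dSet x C` is the distance from the point `x` to the finite set `C`. -/
noncomputable def dSet {d : ℕ} (x : EuclideanSpace ℝ (Fin d))
    (C : Finset (EuclideanSpace ℝ (Fin d))) : ℝ :=
  sInf ((fun c => dist x c) '' (C : Set (EuclideanSpace ℝ (Fin d))))

/-- `kzCost z X C = Σ_{x ∈ X} dist(x,C)^z`. -/
noncomputable def kzCost {d : ℕ} (z : ℝ) (X C : Finset (EuclideanSpace ℝ (Fin d))) : ℝ :=
  ∑ x ∈ X, dSet x C ^ z

/-- The `(k,z)`-medoids sensitivity of `x` with respect to `X`. -/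
noncomputable def medoidSens {d : ℕ} (z : ℝ) (k : ℕ)
    (X : Finset (EuclideanSpace ℝ (Fin d))) (x : EuclideanSpace ℝ (Fin d)) : ℝ :=
  sSup {r : ℝ | ∃ C : Finset (EuclideanSpace ℝ (Fin d)),
    C ⊆ X ∧ C.Nonempty ∧ C.card ≤ k ∧ r = dSet x C ^ z / kzCost z X C}

section helpers

variable {d : ℕ} {x y : EuclideanSpace ℝ (Fin d)} {C X : Finset (EuclideanSpace ℝ (Fin d))}

lemma dSet_nonneg : 0 ≤ dSet x C :=
  Real.sInf_nonneg (by rintro r ⟨c, hc, rfl⟩; exact dist_nonneg)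

lemma dSet_le {c : EuclideanSpace ℝ (Fin d)} (hc : c ∈ C) : dSet x C ≤ dist x c :=
  csInf_le ⟨0, by rintro r ⟨c', _, rfl⟩; exact dist_nonneg⟩ ⟨c, hc, rfl⟩

lemma dSet_exists (h : C.Nonempty) : ∃ c ∈ C, dSet x C = dist x c := by
  have hne : ((fun c => dist x c) '' (C : Set _)).Nonempty := ⟨_, h.choose, h.choose_spec, rfl⟩
  have hfin : ((fun c => dist x c) '' (C : Set _)).Finite := (C.finite_toSet).image _
  obtain ⟨c, hc, hd⟩ := hne.csInf_mem hfin
  exact ⟨c, hc, hd.symm⟩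

lemma dSet_triangle (h : C.Nonempty) : dSet x C ≤ dist x y + dSet y C := by
  obtain ⟨c, hc, hd⟩ := dSet_exists (x := y) h
  calc dSet x C ≤ dist x c := dSet_le hc
  _ ≤ dist x y + dist y c := dist_triangle _ _ _
  _ = dist x y + dSet y C := by rw [hd]

lemma kzCost_nonneg {z : ℝ} : 0 ≤ kzCost z X C :=
  Finset.sum_nonneg fun _ _ => Real.rpow_nonneg dSet_nonneg _

lemma kzCost_pos {z : ℝ} (hC : C.Nonempty) (hcard : C.card < X.card) :
    0 < kzCost z X C := by
  have hns : ¬ X ⊆ C := by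
    intro h
    have := Finset.card_le_card h
    omega
  obtain ⟨y, hyX, hyC⟩ := Finset.not_subset.1 hns
  have hpos : 0 < dSet y C := by
    obtain ⟨c, hcC, hd⟩ := dSet_exists (x := y) hC
    rw [hd, dist_pos]
    intro h
    exact hyC (by rw [h]; exact hcC)
  have h2 : 0 < dSet y C ^ z := Real.rpow_pos_of_pos hpos z
  have h3 : dSet y C ^ z ≤ ∑ w ∈ X, dSet w C ^ z :=
    Finset.single_le_sum (f := fun w => dSet w C ^ z)
      (fun i _ => Real.rpow_nonneg dSet_nonneg z) hyX
  rw [kzCost]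
  linarith

lemma add_rpow_le {a b z : ℝ} (ha : 0 ≤ a) (hb : 0 ≤ b) (hz : 0 ≤ z) :
    (a + b) ^ z ≤ 2 ^ z * (a ^ z + b ^ z) := by
  rcases le_total a b with h | h
  · calc (a + b) ^ z ≤ (2 * b) ^ z :=
        Real.rpow_le_rpow (by linarith) (by linarith) hz
    _ = 2 ^ z * b ^ z := Real.mul_rpow (by norm_num) hb
    _ ≤ 2 ^ z * (a ^ z + b ^ z) := by
        have := Real.rpow_nonneg ha z
        have h2 : (0:ℝ) ≤ 2 ^ z := Real.rpow_nonneg (by norm_num) z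
        nlinarith
  · calc (a + b) ^ z ≤ (2 * a) ^ z :=
        Real.rpow_le_rpow (by linarith) (by linarith) hz
    _ = 2 ^ z * a ^ z := Real.mul_rpow (by norm_num) ha
    _ ≤ 2 ^ z * (a ^ z + b ^ z) := by
        have := Real.rpow_nonneg hb z
        have h2 : (0:ℝ) ≤ 2 ^ z := Real.rpow_nonneg (by norm_num) z
        nlinarith

lemma ratio_step {a b D Cc t g τ : ℝ} (hD : 0 < D) (hCc : 0 < Cc)
    (hb : 0 ≤ b) (ht : 0 ≤ t) (hg : 0 ≤ g)
    (hnum : a ≤ t * b) (hcost : Cc ≤ g * D) (hτ : b / Cc ≤ τ) :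
    a / D ≤ t * g * τ := by
  have h1 : a / D ≤ t * g * (b / Cc) := by
    rw [← mul_div_assoc, div_le_div_iff₀ hD hCc]
    nlinarith [mul_le_mul_of_nonneg_right hnum hCc.le,
      mul_le_mul_of_nonneg_left hcost (mul_nonneg ht hb)]
  have h2 : t * g * (b / Cc) ≤ t * g * τ :=
    mul_le_mul_of_nonneg_left hτ (mul_nonneg ht hg)
  linarith

end helpers

set_option maxHeartbeats 2000000 in
/-- The estimate `ŝ(x) = max_{p ∈ X \ {x}} r_p^z / (Ψ_p + n_b(p)·r_p^z)` is a
`2^z`-times-constant-factor approximation of the `(k,z)`-medoids sensitivity `τ(x)`. -/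
theorem batch_sensitivity_estimate
    (z ζ₁ ζ₂ : ℝ) (hz : 1 ≤ z) (hζ₁ : 1 ≤ ζ₁) (hζ₂ : 1 ≤ ζ₂) :
    ∃ γ₁ γ₂ : ℝ, 1 ≤ γ₁ ∧ 1 ≤ γ₂ ∧
      ∀ (k d : ℕ), 1 ≤ k → 1 ≤ d →
        ∀ (X : Finset (EuclideanSpace ℝ (Fin d))) (x : EuclideanSpace ℝ (Fin d))
          (Q : EuclideanSpace ℝ (Fin d) → Finset (EuclideanSpace ℝ (Fin d)))
          (Ψ : EuclideanSpace ℝ (Fin d) → ℝ)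
          (π : EuclideanSpace ℝ (Fin d) → EuclideanSpace ℝ (Fin d) → EuclideanSpace ℝ (Fin d)),
          k < X.card → x ∈ X → (∃ p ∈ X, p ≠ x) →
          (∀ p ∈ X, p ≠ x →
            Q p ⊆ X ∧ p ∈ Q p ∧ (Q p).card ≤ k ∧
            (∀ T : Finset (EuclideanSpace ℝ (Fin d)), T ⊆ X → p ∈ T → T.card ≤ k →
              kzCost z X (Q p) ≤ ζ₁ * kzCost z X T) ∧
            (1 / ζ₂) * kzCost z X (Q p) ≤ Ψ p ∧ Ψ p ≤ ζ₂ * kzCost z X (Q p) ∧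
            (∀ y ∈ X, π p y ∈ Q p ∧ dist y (π p y) = dSet y (Q p))) →
          (1 / γ₁) * medoidSens z k X x ≤
              sSup {r : ℝ | ∃ p ∈ X, p ≠ x ∧
                r = dist x p ^ z / (Ψ p +
                  ((X.filter (fun y => dist (π p y) x ≤ dist x p / 2)).card : ℝ)
                    * dist x p ^ z)} ∧
            sSup {r : ℝ | ∃ p ∈ X, p ≠ x ∧
                r = dist x p ^ z / (Ψ p +
                  ((X.filter (fun y => dist (π p y) x ≤ dist x p / 2)).card : ℝ)
                    * dist x p ^ z)} ≤ 2 ^ z * γ₂ * medoidSens z k X x := by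
  have hz0 : (0:ℝ) ≤ z := by linarith
  have hζ₂0 : (0:ℝ) < ζ₂ := by linarith
  have hζ₁0 : (0:ℝ) < ζ₁ := by linarith
  have h2z : (1:ℝ) ≤ 2 ^ z := by
    have := Real.rpow_le_rpow (by norm_num : (0:ℝ) ≤ 1) one_le_two hz0
    rwa [Real.one_rpow] at this
  have h3z : (0:ℝ) ≤ 3 ^ z := Real.rpow_nonneg (by norm_num) z
  have h4z : (0:ℝ) ≤ 4 ^ z := Real.rpow_nonneg (by norm_num) z
  refine ⟨ζ₁ * ζ₂ + 4 ^ z * (1 + ζ₁), 2 ^ z * ζ₂ + 3 ^ z, by nlinarith, by nlinarith, ?_⟩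
  intro k d hk hd X x Q Ψ π hkX hxX hpex hH
  obtain ⟨p₀, hp₀X, hp₀x⟩ := hpex
  -- the τ-defining set
  set T : Set ℝ := {r : ℝ | ∃ C : Finset (EuclideanSpace ℝ (Fin d)),
    C ⊆ X ∧ C.Nonempty ∧ C.card ≤ k ∧ r = dSet x C ^ z / kzCost z X C} with hTdef
  have hTfin : T.Finite := by
    have h1 : {C : Finset (EuclideanSpace ℝ (Fin d)) | C ⊆ X}.Finite := by
      refine Set.Finite.subset X.powerset.finite_toSet ?_
      intro C hC
      simpa [Finset.mem_powerset] using hC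
    refine Set.Finite.subset (h1.image (fun C => dSet x C ^ z / kzCost z X C)) ?_
    rintro r ⟨C, hC1, _, _, rfl⟩
    exact ⟨C, hC1, rfl⟩
  have hTne : T.Nonempty :=
    ⟨_, {x}, Finset.singleton_subset_iff.2 hxX, Finset.singleton_nonempty x,
      by simpa using hk, rfl⟩
  have hTbdd : BddAbove T := hTfin.bddAbove
  have hτ_ge : ∀ C : Finset (EuclideanSpace ℝ (Fin d)), C ⊆ X → C.Nonempty → C.card ≤ k →
      dSet x C ^ z / kzCost z X C ≤ medoidSens z k X x := by
    intro C h1 h2 h3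
    exact le_csSup hTbdd ⟨C, h1, h2, h3, rfl⟩
  have hτeqT : medoidSens z k X x = sSup T := rfl
  -- the estimate set
  set S : Set ℝ := {r : ℝ | ∃ p ∈ X, p ≠ x ∧
      r = dist x p ^ z / (Ψ p +
        ((X.filter (fun y => dist (π p y) x ≤ dist x p / 2)).card : ℝ)
          * dist x p ^ z)} with hSdef
  have hSfin : S.Finite := by
    refine Set.Finite.subset (X.finite_toSet.image (fun p => dist x p ^ z / (Ψ p +
        ((X.filter (fun y => dist (π p y) x ≤ dist x p / 2)).card : ℝ) * dist x p ^ z))) ?_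
    rintro r ⟨p, hp, _, rfl⟩
    exact ⟨p, hp, rfl⟩
  have hSne : S.Nonempty := ⟨_, p₀, hp₀X, hp₀x, rfl⟩
  have hSbdd : BddAbove S := hSfin.bddAbove
  -- every element of S is nonnegative
  have hSnonneg : ∀ r ∈ S, 0 ≤ r := by
    rintro r ⟨p, hpX, hpx, rfl⟩
    obtain ⟨hQX, hpQ, hQk, happ, hΨl, hΨu, hπ⟩ := hH p hpX hpx
    have hΨ0 : 0 ≤ Ψ p := by
      have hc : (0:ℝ) ≤ kzCost z X (Q p) := kzCost_nonneg
      have h1 : (0:ℝ) ≤ (1 / ζ₂) * kzCost z X (Q p) :=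
        mul_nonneg (one_div_nonneg.2 hζ₂0.le) hc
      linarith
    refine div_nonneg (Real.rpow_nonneg dist_nonneg z) ?_
    have : (0:ℝ) ≤ ((X.filter (fun y => dist (π p y) x ≤ dist x p / 2)).card : ℝ)
        * dist x p ^ z := by positivity
    linarith
  have hS0 : (0:ℝ) ≤ sSup S := by
    obtain ⟨r, hr⟩ := hSne
    exact le_trans (hSnonneg r hr) (le_csSup hSbdd hr)
  constructor
  · -- lower bound
    have hτmem : ∃ C : Finset (EuclideanSpace ℝ (Fin d)), C ⊆ X ∧ C.Nonempty ∧ C.card ≤ k ∧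
        medoidSens z k X x = dSet x C ^ z / kzCost z X C := by
      have h := hTne.csSup_mem hTfin
      rw [← hτeqT] at h
      exact h
    obtain ⟨C, hC1, hC2, hC3, hτeq⟩ := hτmem
    by_cases hdC : 0 < dSet x C
    · obtain ⟨ps, hpsC, hdps⟩ := dSet_exists (x := x) hC2
      have hpsX : ps ∈ X := hC1 hpsC
      have hpsx : ps ≠ x := by
        intro h
        rw [h] at hdps
        rw [hdps] at hdC
        simp at hdC
      obtain ⟨hQX, hpQ, hQk, happ, hΨl, hΨu, hπ⟩ := hH ps hpsX hpsx
      set rp := dist x ps with hrpdef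
      have hrp : 0 < rp := by rw [← hdps]; exact hdC
      have hCost : 0 < kzCost z X C := kzCost_pos hC2 (lt_of_le_of_lt hC3 hkX)
      have hCostQ : 0 < kzCost z X (Q ps) := kzCost_pos ⟨ps, hpQ⟩ (lt_of_le_of_lt hQk hkX)
      have hΨpos : 0 < Ψ ps := by
        have h1 : (0:ℝ) < (1 / ζ₂) * kzCost z X (Q ps) :=
          mul_pos (one_div_pos.2 hζ₂0) hCostQ
        linarith
      have hCQC : kzCost z X (Q ps) ≤ ζ₁ * kzCost z X C := happ C hC1 hpsC hC3
      have hΨb : Ψ ps ≤ ζ₂ * ζ₁ * kzCost z X C := by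
        have := mul_le_mul_of_nonneg_left hCQC hζ₂0.le
        rw [← mul_assoc] at this
        linarith [hΨu]
      set n : ℝ := ((X.filter (fun y => dist (π ps y) x ≤ rp / 2)).card : ℝ) with hndef
      have hn : 0 ≤ n := Nat.cast_nonneg _
      have hrpz : 0 < rp ^ z := Real.rpow_pos_of_pos hrp z
      -- the ball-count bound
      have hnb : n * (rp / 4) ^ z ≤ kzCost z X C + kzCost z X (Q ps) := by
        have hpt : ∀ y ∈ X.filter (fun y => dist (π ps y) x ≤ rp / 2),
            (rp / 4) ^ z ≤ dSet y C ^ z + dSet y (Q ps) ^ z := by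
          intro y hy
          obtain ⟨hyX, hyb⟩ := Finset.mem_filter.1 hy
          obtain ⟨hπQ, hπd⟩ := hπ y hyX
          have hq0 : (0:ℝ) ≤ rp / 4 := by linarith
          have hc0 : 0 ≤ dSet y C ^ z := Real.rpow_nonneg dSet_nonneg z
          have hq0' : 0 ≤ dSet y (Q ps) ^ z := Real.rpow_nonneg dSet_nonneg z
          by_cases hxy : dist x y ≤ 3 / 4 * rp
          · have htr : dSet x C ≤ dist x y + dSet y C := dSet_triangle hC2
            have h1 : rp / 4 ≤ dSet y C := by
              rw [hdps] at htr
              linarith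
            have h2 : (rp / 4) ^ z ≤ dSet y C ^ z :=
              Real.rpow_le_rpow hq0 h1 hz0
            linarith
          · have ht : dist x y ≤ dist x (π ps y) + dist (π ps y) y := dist_triangle _ _ _
            have hc1 : dist x (π ps y) = dist (π ps y) x := dist_comm _ _
            have hc2 : dist (π ps y) y = dist y (π ps y) := dist_comm _ _
            have h1 : rp / 4 ≤ dist y (π ps y) := by
              rw [hc1, hc2] at ht
              have := not_le.1 hxy
              linarith
            have h2 : rp / 4 ≤ dSet y (Q ps) := by rw [← hπd]; exact h1
            have h3 : (rp / 4) ^ z ≤ dSet y (Q ps) ^ z :=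
              Real.rpow_le_rpow hq0 h2 hz0
            linarith
        have hs1 : n * (rp / 4) ^ z
            = ∑ _y ∈ X.filter (fun y => dist (π ps y) x ≤ rp / 2), (rp / 4) ^ z := by
          rw [Finset.sum_const, nsmul_eq_mul, hndef]
        have hs2 : ∑ _y ∈ X.filter (fun y => dist (π ps y) x ≤ rp / 2), (rp / 4) ^ z
            ≤ ∑ y ∈ X.filter (fun y => dist (π ps y) x ≤ rp / 2),
                (dSet y C ^ z + dSet y (Q ps) ^ z) := Finset.sum_le_sum hpt
        have hs3 : ∑ y ∈ X.filter (fun y => dist (π ps y) x ≤ rp / 2),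
                (dSet y C ^ z + dSet y (Q ps) ^ z)
            ≤ ∑ y ∈ X, (dSet y C ^ z + dSet y (Q ps) ^ z) := by
          refine Finset.sum_le_sum_of_subset_of_nonneg (Finset.filter_subset _ _) ?_
          intro i _ _
          have hc0 : 0 ≤ dSet i C ^ z := Real.rpow_nonneg dSet_nonneg z
          have hq0' : 0 ≤ dSet i (Q ps) ^ z := Real.rpow_nonneg dSet_nonneg z
          linarith
        have hs4 : ∑ y ∈ X, (dSet y C ^ z + dSet y (Q ps) ^ z)
            = kzCost z X C + kzCost z X (Q ps) := Finset.sum_add_distrib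
        rw [hs1]
        linarith [hs2, hs3, hs4.le, hs4.ge]
      have hquart : rp ^ z = 4 ^ z * (rp / 4) ^ z := by
        rw [Real.div_rpow hrp.le (by norm_num)]
        have h4pos : (0:ℝ) < 4 ^ z := Real.rpow_pos_of_pos (by norm_num) z
        field_simp
      have hnb2 : n * rp ^ z ≤ 4 ^ z * (1 + ζ₁) * kzCost z X C := by
        have h1 : n * rp ^ z = 4 ^ z * (n * (rp / 4) ^ z) := by rw [hquart]; ring
        have h2 : kzCost z X C + kzCost z X (Q ps) ≤ (1 + ζ₁) * kzCost z X C := by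
          linarith [hCQC]
        calc n * rp ^ z = 4 ^ z * (n * (rp / 4) ^ z) := h1
        _ ≤ 4 ^ z * ((1 + ζ₁) * kzCost z X C) :=
            mul_le_mul_of_nonneg_left (hnb.trans h2) h4z
        _ = 4 ^ z * (1 + ζ₁) * kzCost z X C := by ring
      have hγ₁Cost : Ψ ps + n * rp ^ z ≤ (ζ₁ * ζ₂ + 4 ^ z * (1 + ζ₁)) * kzCost z X C := by
        have expand : (ζ₁ * ζ₂ + 4 ^ z * (1 + ζ₁)) * kzCost z X C
            = ζ₂ * ζ₁ * kzCost z X C + 4 ^ z * (1 + ζ₁) * kzCost z X C := by ring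
        rw [expand]
        linarith [hΨb, hnb2]
      have hD : 0 < Ψ ps + n * rp ^ z := by
        have : (0:ℝ) ≤ n * rp ^ z := mul_nonneg hn hrpz.le
        linarith
      have hγ₁pos : (0:ℝ) < ζ₁ * ζ₂ + 4 ^ z * (1 + ζ₁) := by nlinarith
      have hmemS : rp ^ z / (Ψ ps + n * rp ^ z) ∈ S := ⟨ps, hpsX, hpsx, rfl⟩
      have hle : (1 / (ζ₁ * ζ₂ + 4 ^ z * (1 + ζ₁))) * medoidSens z k X x
          ≤ rp ^ z / (Ψ ps + n * rp ^ z) := by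
        rw [hτeq, hdps]
        rw [div_mul_eq_mul_div, one_mul, div_div]
        refine div_le_div_of_nonneg_left hrpz.le hD ?_
        exact hγ₁Cost.trans_eq (mul_comm _ _)
      exact hle.trans (le_csSup hSbdd hmemS)
    · have h0 : dSet x C = 0 := le_antisymm (not_lt.1 hdC) dSet_nonneg
      have hτ0 : medoidSens z k X x = 0 := by
        have hzne : z ≠ 0 := ne_of_gt (by linarith : (0:ℝ) < z)
        rw [hτeq, h0, Real.zero_rpow hzne, zero_div]
      rw [hτ0, mul_zero]
      exact hS0
  · -- upper bound
    refine csSup_le hSne ?_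
    rintro r ⟨p, hpX, hpx, rfl⟩
    obtain ⟨hQX, hpQ, hQk, happ, hΨl, hΨu, hπ⟩ := hH p hpX hpx
    have hCostQ : 0 < kzCost z X (Q p) := kzCost_pos ⟨p, hpQ⟩ (lt_of_le_of_lt hQk hkX)
    have hΨpos : 0 < Ψ p := by
      have h1 : (0:ℝ) < (1 / ζ₂) * kzCost z X (Q p) :=
        mul_pos (one_div_pos.2 hζ₂0) hCostQ
      linarith
    have hCQΨ : kzCost z X (Q p) ≤ ζ₂ * Ψ p := by
      have := mul_le_mul_of_nonneg_left hΨl hζ₂0.le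
      rw [mul_comm (1 / ζ₂) (kzCost z X (Q p))] at this
      rw [← mul_assoc] at this
      field_simp at this
      linarith [this]
    set rp := dist x p with hrpdef
    have hrp : 0 < rp := dist_pos.2 (Ne.symm hpx)
    set n : ℝ := ((X.filter (fun y => dist (π p y) x ≤ rp / 2)).card : ℝ) with hndef
    have hn : 0 ≤ n := Nat.cast_nonneg _
    have hrpz : 0 < rp ^ z := Real.rpow_pos_of_pos hrp z
    have hD : 0 < Ψ p + n * rp ^ z := by nlinarith
    have hhalf : rp ^ z = 2 ^ z * (rp / 2) ^ z := by
      rw [Real.div_rpow hrp.le (by norm_num)]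
      field_simp
    have hγ : ζ₂ ≤ 2 ^ z * ζ₂ + 3 ^ z := by nlinarith
    have hγ0 : (0:ℝ) < 2 ^ z * ζ₂ + 3 ^ z := by nlinarith
    -- the key reduction
    have key : ∀ C : Finset (EuclideanSpace ℝ (Fin d)), C ⊆ X → C.Nonempty → C.card ≤ k →
        rp / 2 ≤ dSet x C →
        kzCost z X C ≤ (2 ^ z * ζ₂ + 3 ^ z) * (Ψ p + n * rp ^ z) →
        rp ^ z / (Ψ p + n * rp ^ z) ≤ 2 ^ z * ((2:ℝ) ^ z * ζ₂ + 3 ^ z) * medoidSens z k X x := by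
      intro C hC1 hC2 hC3 hdist hcost
      have hCost : 0 < kzCost z X C := kzCost_pos hC2 (lt_of_le_of_lt hC3 hkX)
      have hτge := hτ_ge C hC1 hC2 hC3
      have hmono : (rp / 2) ^ z ≤ dSet x C ^ z :=
        Real.rpow_le_rpow (by linarith) hdist hz0
      have h2z0 : (0:ℝ) ≤ 2 ^ z := by linarith
      have hnum : rp ^ z ≤ 2 ^ z * dSet x C ^ z := by
        rw [hhalf]
        exact mul_le_mul_of_nonneg_left hmono h2z0
      have hdC0 : (0:ℝ) ≤ dSet x C ^ z := Real.rpow_nonneg dSet_nonneg z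
      exact ratio_step hD hCost hdC0 h2z0 hγ0.le hnum hcost hτge
    by_cases hcase : dSet x (Q p) ≤ rp / 2
    · -- case B: some center is close to x; swap it for p
      obtain ⟨q, hqQ, hq⟩ := dSet_exists (x := x) ⟨p, hpQ⟩
      have hqclose : dist x q ≤ rp / 2 := by rw [← hq]; exact hcase
      refine key (insert p ((Q p).filter (fun c => rp / 2 < dist x c))) ?_ ?_ ?_ ?_ ?_
      · exact Finset.insert_subset hpX ((Finset.filter_subset _ _).trans hQX)
      · exact ⟨p, Finset.mem_insert_self _ _⟩
      · -- cardinality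
        have hqe : q ∉ (Q p).filter (fun c => rp / 2 < dist x c) := by
          intro hmem
          exact absurd (Finset.mem_filter.1 hmem).2 (not_lt.2 hqclose)
        have hsub : (Q p).filter (fun c => rp / 2 < dist x c) ⊆ (Q p).erase q := by
          intro c hc
          refine Finset.mem_erase.2 ⟨?_, (Finset.filter_subset _ _) hc⟩
          intro hcq
          exact hqe (hcq ▸ hc)
        have h1 := Finset.card_le_card hsub
        have h2 : ((Q p).erase q).card + 1 = (Q p).card := Finset.card_erase_add_one hqQ
        have h3 := Finset.card_insert_le p ((Q p).filter (fun c => rp / 2 < dist x c))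
        omega
      · -- distance from x to the new set
        refine le_csInf ⟨dist x p, ⟨p, Finset.mem_coe.2 (Finset.mem_insert_self _ _), rfl⟩⟩ ?_
        rintro b ⟨c, hc, rfl⟩
        rcases Finset.mem_insert.1 (Finset.mem_coe.1 hc) with h | h
        · rw [h]
          show rp / 2 ≤ dist x p
          rw [← hrpdef]
          linarith
        · exact le_of_lt (Finset.mem_filter.1 h).2
      · -- cost bound
        set C := insert p ((Q p).filter (fun c => rp / 2 < dist x c)) with hCdef
        have hpt : ∀ y ∈ X, dSet y C ^ z ≤ 2 ^ z * dSet y (Q p) ^ z +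
            (if dist (π p y) x ≤ rp / 2 then 3 ^ z * rp ^ z else 0) := by
          intro y hyX
          obtain ⟨hπQ, hπd⟩ := hπ y hyX
          by_cases hy : dist (π p y) x ≤ rp / 2
          · rw [if_pos hy]
            have h1 : dSet y C ≤ dist y p := dSet_le (Finset.mem_insert_self _ _)
            have h2 : dist y p ≤ dist y (π p y) + dist (π p y) x + dist x p := by
              calc dist y p ≤ dist y (π p y) + dist (π p y) p := dist_triangle _ _ _
              _ ≤ dist y (π p y) + (dist (π p y) x + dist x p) := by
                  have := dist_triangle (π p y) x p
                  linarith
              _ = dist y (π p y) + dist (π p y) x + dist x p := by ring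
            have h3 : dSet y C ≤ dSet y (Q p) + 3 / 2 * rp := by
              rw [← hπd, ← hrpdef] at *
              linarith
            have h4 : dSet y C ^ z ≤ (dSet y (Q p) + 3 / 2 * rp) ^ z :=
              Real.rpow_le_rpow dSet_nonneg h3 hz0
            have h5 : (dSet y (Q p) + 3 / 2 * rp) ^ z ≤
                2 ^ z * (dSet y (Q p) ^ z + (3 / 2 * rp) ^ z) :=
              add_rpow_le dSet_nonneg (by linarith) hz0
            have h6 : 2 ^ z * (3 / 2 * rp) ^ z = 3 ^ z * rp ^ z := by
              rw [Real.mul_rpow (by norm_num) hrp.le, ← mul_assoc,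
                ← Real.mul_rpow (by norm_num : (0:ℝ) ≤ 2) (by norm_num : (0:ℝ) ≤ 3/2)]
              norm_num
            calc dSet y C ^ z ≤ 2 ^ z * (dSet y (Q p) ^ z + (3 / 2 * rp) ^ z) := h4.trans h5
            _ = 2 ^ z * dSet y (Q p) ^ z + 2 ^ z * (3 / 2 * rp) ^ z := mul_add _ _ _
            _ = 2 ^ z * dSet y (Q p) ^ z + 3 ^ z * rp ^ z := by rw [h6]
          · rw [if_neg hy, add_zero]
            have hmem : π p y ∈ C := by
              rw [hCdef]
              refine Finset.mem_insert_of_mem (Finset.mem_filter.2 ⟨hπQ, ?_⟩)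
              rw [dist_comm]
              exact not_le.1 hy
            have h1 : dSet y C ≤ dSet y (Q p) := by rw [← hπd]; exact dSet_le hmem
            have h2 : dSet y C ^ z ≤ dSet y (Q p) ^ z :=
              Real.rpow_le_rpow dSet_nonneg h1 hz0
            have h3 : 0 ≤ dSet y (Q p) ^ z := Real.rpow_nonneg dSet_nonneg z
            exact h2.trans (le_mul_of_one_le_left h3 h2z)
        have hsum : kzCost z X C ≤ ∑ y ∈ X, (2 ^ z * dSet y (Q p) ^ z +
            (if dist (π p y) x ≤ rp / 2 then 3 ^ z * rp ^ z else 0)) :=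
          Finset.sum_le_sum hpt
        rw [Finset.sum_add_distrib, ← Finset.mul_sum] at hsum
        have hite : ∑ y ∈ X, (if dist (π p y) x ≤ rp / 2 then 3 ^ z * rp ^ z else 0)
            = n * (3 ^ z * rp ^ z) := by
          rw [← Finset.sum_filter, Finset.sum_const, nsmul_eq_mul, hndef]
        rw [hite] at hsum
        have hQsum : ∑ y ∈ X, dSet y (Q p) ^ z = kzCost z X (Q p) := rfl
        rw [hQsum] at hsum
        have h2z0 : (0:ℝ) ≤ 2 ^ z := by linarith
        have e1 : 2 ^ z * kzCost z X (Q p) ≤ 2 ^ z * (ζ₂ * Ψ p) :=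
          mul_le_mul_of_nonneg_left hCQΨ h2z0
        have e2 : (0:ℝ) ≤ n * rp ^ z := mul_nonneg hn hrpz.le
        have e3 : (0:ℝ) ≤ 2 ^ z * ζ₂ * (n * rp ^ z) :=
          mul_nonneg (mul_nonneg h2z0 hζ₂0.le) e2
        have e4 : (0:ℝ) ≤ 3 ^ z * Ψ p := mul_nonneg h3z hΨpos.le
        have expand : (2 ^ z * ζ₂ + 3 ^ z) * (Ψ p + n * rp ^ z)
            = 2 ^ z * (ζ₂ * Ψ p) + 2 ^ z * ζ₂ * (n * rp ^ z) + 3 ^ z * Ψ p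
              + 3 ^ z * (n * rp ^ z) := by ring
        have e5 : n * (3 ^ z * rp ^ z) = 3 ^ z * (n * rp ^ z) := by ring
        rw [expand]
        linarith [hsum, e1, e3, e4, e5]
    · -- case A: all centers of Q p are far from x
      refine key (Q p) hQX ⟨p, hpQ⟩ hQk (le_of_lt (not_le.1 hcase)) ?_
      have e2 : (0:ℝ) ≤ n * rp ^ z := mul_nonneg hn hrpz.le
      have h2z0 : (0:ℝ) ≤ 2 ^ z := by linarith
      have e3 : (0:ℝ) ≤ 2 ^ z * ζ₂ * (n * rp ^ z) :=
        mul_nonneg (mul_nonneg h2z0 hζ₂0.le) e2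
      have e4 : (0:ℝ) ≤ 3 ^ z * Ψ p := mul_nonneg h3z hΨpos.le
      have e1 : ζ₂ * Ψ p ≤ 2 ^ z * (ζ₂ * Ψ p) :=
        le_mul_of_one_le_left (mul_nonneg hζ₂0.le hΨpos.le) h2z
      have expand : (2 ^ z * ζ₂ + 3 ^ z) * (Ψ p + n * rp ^ z)
          = 2 ^ z * (ζ₂ * Ψ p) + 2 ^ z * ζ₂ * (n * rp ^ z) + 3 ^ z * Ψ p
            + 3 ^ z * (n * rp ^ z) := by ring
      rw [expand]
      have e5 : (0:ℝ) ≤ 3 ^ z * (n * rp ^ z) := mul_nonneg h3z e2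
      linarith [hCQΨ, e1, e3, e4, e5]
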